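/- Suppose the interaction graph is the undirected ring on V = {1,…,n} with n even, n ≥ 4 (indices mod n, N_i = {i−1, i+1}). Let σ ∈ (0,1/2) satisfy the fixed-point equation 1/2 − σ = (1/2 + σ) − (1/2 + σ)²(1/2 − σ), and suppose the initial opinions alternate around the ring: p_i(0) = 1/2 + σ for i odd and p_i(0) = 1/2 − σ for i even (i.e., q_i(0) = 1 − q_{i+1}(0) for all i). Then under the CODA update, opinions flip synchronously at every step: p_i(k+1) = 1 − p_i(k) for all i ∈ V and k ∈ ℕ; in particular p_i(k) ∈ {1/2 − σ, 1/2 + σ} for all i and k, and n^+(k) = n^−(k) = n/2 for all k. -/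

import Mathlib

/-- CODA model on the undirected ring with `n` even, `n ≥ 4`, and alternating
initial opinions `1/2 ± σ` where `σ` solves the fixed-point equation
`1/2 - σ = (1/2 + σ) - (1/2 + σ)²(1/2 - σ)`: opinions flip synchronously at every
step, stay in `{1/2 - σ, 1/2 + σ}`, and `n^+(k) = n^-(k) = n/2` for all `k`. -/
theorem stmt_19
    (n m : ℕ) (hm : 2 ≤ m) (hn : n = 2 * m) [NeZero n]
    (N : Fin n → Finset (Fin n))
    (hring : ∀ i : Fin n, N i = {i - 1, i + 1})
    (p : Fin n → ℕ → ℝ) (q : Fin n → ℕ → ℕ)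
    (hq0 : ∀ i k, (p i k < 1 / 2 ∨ (p i k = 1 / 2 ∧ p i (k - 1) < 1 / 2)) → q i k = 0)
    (hq1 : ∀ i k, ¬(p i k < 1 / 2 ∨ (p i k = 1 / 2 ∧ p i (k - 1) < 1 / 2)) → q i k = 1)
    (hupd : ∀ i k, p i (k + 1) =
      p i k + p i k * (1 - p i k) / (N i).card * ∑ j ∈ N i, ((q j k : ℝ) - p i k))
    (σ : ℝ) (hσ : σ ∈ Set.Ioo (0 : ℝ) (1 / 2))
    (hfix : 1 / 2 - σ = (1 / 2 + σ) - (1 / 2 + σ) ^ 2 * (1 / 2 - σ))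
    (hinit : ∀ i : Fin n,
      (Odd i.val → p i 0 = 1 / 2 + σ) ∧ (Even i.val → p i 0 = 1 / 2 - σ)) :
    (∀ i : Fin n, ∀ k : ℕ, p i (k + 1) = 1 - p i k) ∧
    (∀ i : Fin n, ∀ k : ℕ, p i k = 1 / 2 - σ ∨ p i k = 1 / 2 + σ) ∧
    (∀ k : ℕ, (Finset.univ.filter fun i : Fin n => q i k = 1).card = m ∧
      (Finset.univ.filter fun i : Fin n => q i k = 0).card = m) := by

  obtain ⟨hσ0, hσh⟩ := hσ
  have hn4 : 4 ≤ n := by omega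
  have hdvd : (2:ℕ) ∣ n := ⟨m, hn⟩
  have hpar : ∀ a : ℕ, a % n % 2 = a % 2 := fun a => Nat.mod_mod_of_dvd a hdvd
  have hone : (1 : Fin n).val = 1 := by
    rw [Fin.val_one']; exact Nat.mod_eq_of_lt (by omega)
  have hadd1 : ∀ i : Fin n, (i + 1).val % 2 = (i.val + 1) % 2 := by
    intro i
    rw [Fin.val_add, hone]
    exact hpar _
  have hsub1 : ∀ i : Fin n, (i - 1).val % 2 = (i.val + 1) % 2 := by
    intro i
    have h := hadd1 (i - 1)
    rw [sub_add_cancel] at h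
    omega
  have hne : ∀ i : Fin n, i - 1 ≠ i + 1 := by
    intro i h
    rw [sub_eq_add_neg] at h
    have h1 : (-1 : Fin n) = 1 := add_left_cancel h
    have h2 : (0 : Fin n) = 1 + 1 := by rw [← neg_add_cancel (1 : Fin n), h1]
    have h3 := congrArg Fin.val h2
    rw [Fin.val_add, hone, Fin.val_zero, Nat.mod_eq_of_lt (by omega)] at h3
    omega
  have qval : ∀ k, (∀ i : Fin n, p i k = if (i.val + k) % 2 = 1 then 1/2 + σ else 1/2 - σ) →
      ∀ j : Fin n, q j k = (j.val + k) % 2 := by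
    intro k hk j
    rcases Nat.mod_two_eq_zero_or_one (j.val + k) with h0 | h1
    · rw [h0]
      apply hq0
      left
      rw [hk j, if_neg (by omega)]
      linarith
    · rw [h1]
      apply hq1
      rw [hk j, if_pos h1]
      push_neg
      constructor
      · linarith
      · intro h; linarith
  have key : ∀ k, ∀ i : Fin n, p i k = if (i.val + k) % 2 = 1 then 1/2 + σ else 1/2 - σ := by
    intro k
    induction k with
    | zero =>
      intro i
      rcases Nat.even_or_odd i.val with he | ho
      · have h2 := Nat.even_iff.mp he
        rw [if_neg (by omega)]
        exact (hinit i).2 he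
      · have h2 := Nat.odd_iff.mp ho
        rw [if_pos (by omega)]
        exact (hinit i).1 ho
    | succ k ih =>
      intro i
      have hq := qval k ih
      have hcard : (N i).card = 2 := by
        rw [hring i, Finset.card_insert_of_notMem (by simp [hne i]), Finset.card_singleton]
      have hsum : ∑ j ∈ N i, ((q j k : ℝ) - p i k) =
          ((q (i-1) k : ℝ) - p i k) + ((q (i+1) k : ℝ) - p i k) := by
        rw [hring i, Finset.sum_pair (hne i)]
      have hup := hupd i k
      rw [hcard, hsum] at hup
      have hqm : q (i-1) k = (i.val + 1 + k) % 2 := by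
        have := hsub1 i; rw [hq (i-1)]; omega
      have hqp : q (i+1) k = (i.val + 1 + k) % 2 := by
        have := hadd1 i; rw [hq (i+1)]; omega
      rcases Nat.mod_two_eq_zero_or_one (i.val + k) with h0 | h1
      · have hp : p i k = 1/2 - σ := by rw [ih i, if_neg (by omega)]
        have e1 : (i.val + 1 + k) % 2 = 1 := by omega
        rw [hqm, hqp, e1, hp] at hup
        rw [if_pos (by omega), hup]
        push_cast
        linear_combination hfix
      · have hp : p i k = 1/2 + σ := by rw [ih i, if_pos h1]
        have e1 : (i.val + 1 + k) % 2 = 0 := by omega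
        rw [hqm, hqp, e1, hp] at hup
        rw [if_neg (by omega), hup]
        push_cast
        linear_combination -hfix
  refine ⟨?_, ?_, ?_⟩
  · intro i k
    have h1 := key k i
    have h2 := key (k+1) i
    rcases Nat.mod_two_eq_zero_or_one (i.val + k) with h0 | ho
    · rw [if_neg (by omega)] at h1
      rw [if_pos (by omega)] at h2
      rw [h1, h2]; ring
    · rw [if_pos (by omega)] at h1
      rw [if_neg (by omega)] at h2
      rw [h1, h2]; ring
  · intro i k
    have h1 := key k i
    rcases Nat.mod_two_eq_zero_or_one (i.val + k) with h0 | ho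
    · left; rw [h1, if_neg (by omega)]
    · right; rw [h1, if_pos (by omega)]
  · intro k
    have hq := qval k (key k)
    have hA : (Finset.univ.filter fun i : Fin n => q i k = 1) =
        Finset.univ.filter (fun i : Fin n => (i.val + k) % 2 = 1) := by
      apply Finset.filter_congr
      intro i _
      rw [hq i]
    have hB : (Finset.univ.filter fun i : Fin n => q i k = 0) =
        Finset.univ.filter (fun i : Fin n => ¬ ((i.val + k) % 2 = 1)) := by
      apply Finset.filter_congr
      intro i _
      rw [hq i]
      omega
    have hcards : (Finset.univ.filter (fun i : Fin n => (i.val + k) % 2 = 1)).card =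
        (Finset.univ.filter (fun i : Fin n => ¬ ((i.val + k) % 2 = 1))).card := by
      refine Finset.card_bij' (fun a _ => a + 1) (fun b _ => b - 1) ?_ ?_ ?_ ?_
      · intro a ha
        simp only [Finset.mem_filter, Finset.mem_univ, true_and] at ha ⊢
        have := hadd1 a
        omega
      · intro b hb
        simp only [Finset.mem_filter, Finset.mem_univ, true_and] at hb ⊢
        have := hsub1 b
        omega
      · intro a _; exact add_sub_cancel_right a 1
      · intro b _; exact sub_add_cancel b 1
    have htot := Finset.card_filter_add_card_filter_not
      (s := (Finset.univ : Finset (Fin n))) (p := fun i : Fin n => (i.val + k) % 2 = 1)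
    rw [Finset.card_univ, Fintype.card_fin] at htot
    rw [hA, hB]
    omega
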